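/- Let S, B, A be finite nonempty sets, let p : S × B × A → (S → ℝ) be a transition kernel (p(s'|s,b,a) ≥ 0 and sums to 1 over s'), let pb : S → (B → ℝ) be a probability distribution over B for each state (pb(b'|s') ≥ 0 summing to 1), let r : S × B × A → ℝ be bounded, and let 0 ≤ γ < 1. Define the operator H on functions q : S × B × A → ℝ by (Hq)(s,b,a) = Σ_{s'} p(s'|s,b,a) [ r(s,b,a) + γ · max_{a'} Σ_{b'} pb(b'|s') q(s',b',a') ]. Then H is a γ-contraction with respect to the supremum norm: ‖Hq₁ − Hq₂‖_∞ ≤ γ‖q₁ − q₂‖_∞. -/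
import Mathlib


open scoped BigOperators

lemma sup'_abs_sub_le_aux {A : Type*} [Fintype A] [Nonempty A] (f g : A → ℝ) (C : ℝ)
    (h : ∀ a, |f a - g a| ≤ C) :
    |Finset.univ.sup' Finset.univ_nonempty f - Finset.univ.sup' Finset.univ_nonempty g| ≤ C := by
  rw [abs_sub_le_iff]
  constructor
  · rw [sub_le_iff_le_add]
    apply Finset.sup'_le
    intro a _
    have h1 := abs_le.mp (h a)
    have h2 := Finset.le_sup' g (Finset.mem_univ a)
    linarith [h1.2]
  · rw [sub_le_iff_le_add]
    apply Finset.sup'_le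
    intro a _
    have h1 := abs_le.mp (h a)
    have h2 := Finset.le_sup' f (Finset.mem_univ a)
    linarith [h1.1]

/-- The TMDP Bellman operator is a γ-contraction in the supremum norm. -/
theorem tmdp_bellman_contraction
    {S B A : Type*} [Fintype S] [Fintype B] [Fintype A]
    [Nonempty S] [Nonempty B] [Nonempty A]
    (p : S → B → A → S → ℝ)
    (hp0 : ∀ s b a s', 0 ≤ p s b a s')
    (hp1 : ∀ s b a, ∑ s', p s b a s' = 1)
    (pb : S → B → ℝ)
    (hpb0 : ∀ s b, 0 ≤ pb s b)
    (hpb1 : ∀ s, ∑ b, pb s b = 1)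
    (r : S → B → A → ℝ)
    (γ : ℝ) (hγ0 : 0 ≤ γ) (hγ1 : γ < 1)
    (H : (S × B × A → ℝ) → (S × B × A → ℝ))
    (hH : ∀ q s b a, H q (s, b, a) =
      ∑ s', p s b a s' *
        (r s b a + γ * Finset.univ.sup' Finset.univ_nonempty
          (fun a' => ∑ b', pb s' b' * q (s', b', a'))))
    (q₁ q₂ : S × B × A → ℝ) :
    ‖H q₁ - H q₂‖ ≤ γ * ‖q₁ - q₂‖ := by
  set C := ‖q₁ - q₂‖ with hC
  have hC0 : 0 ≤ C := norm_nonneg _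
  set M : (S × B × A → ℝ) → S → ℝ := fun q s' =>
    Finset.univ.sup' Finset.univ_nonempty (fun a' => ∑ b', pb s' b' * q (s', b', a')) with hM
  have hMle : ∀ s', |M q₁ s' - M q₂ s'| ≤ C := by
    intro s'
    apply sup'_abs_sub_le_aux
    intro a'
    rw [← Finset.sum_sub_distrib]
    calc |∑ b', (pb s' b' * q₁ (s', b', a') - pb s' b' * q₂ (s', b', a'))|
        ≤ ∑ b', |pb s' b' * q₁ (s', b', a') - pb s' b' * q₂ (s', b', a')| :=
          Finset.abs_sum_le_sum_abs _ _
      _ = ∑ b', pb s' b' * |q₁ (s', b', a') - q₂ (s', b', a')| := by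
          refine Finset.sum_congr rfl fun b' _ => ?_
          rw [← mul_sub, abs_mul, abs_of_nonneg (hpb0 s' b')]
      _ ≤ ∑ b', pb s' b' * C := by
          refine Finset.sum_le_sum fun b' _ => ?_
          refine mul_le_mul_of_nonneg_left ?_ (hpb0 s' b')
          have := norm_le_pi_norm (q₁ - q₂) (s', b', a')
          simpa [Real.norm_eq_abs] using this
      _ = C := by rw [← Finset.sum_mul, hpb1 s', one_mul]
  rw [show γ * ‖q₁ - q₂‖ = γ * C from rfl]
  apply pi_norm_le_iff_of_nonneg (by positivity) |>.mpr
  rintro ⟨s, b, a⟩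
  have hdiff : (H q₁ - H q₂) (s, b, a) = ∑ s', p s b a s' * γ * (M q₁ s' - M q₂ s') := by
    simp only [Pi.sub_apply, hH, ← Finset.sum_sub_distrib]
    refine Finset.sum_congr rfl fun s' _ => ?_
    simp only [hM]
    ring
  rw [Real.norm_eq_abs, hdiff]
  calc |∑ s', p s b a s' * γ * (M q₁ s' - M q₂ s')|
      ≤ ∑ s', |p s b a s' * γ * (M q₁ s' - M q₂ s')| := Finset.abs_sum_le_sum_abs _ _
    _ ≤ ∑ s', p s b a s' * γ * C := by
        refine Finset.sum_le_sum fun s' _ => ?_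
        rw [abs_mul, abs_of_nonneg (mul_nonneg (hp0 s b a s') hγ0)]
        exact mul_le_mul_of_nonneg_left (hMle s') (mul_nonneg (hp0 s b a s') hγ0)
    _ = γ * C := by
        simp only [mul_assoc, ← Finset.sum_mul]
        rw [hp1 s b a, one_mul]
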